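/- Let k be a field, m ≥ 1 an integer, n = 2m+1, and w = (a_0,…,a_n) ∈ k^{n+1}. Let A_{m,m;r} denote the (m+1)×(m+1) Hankel matrix (a_{i+j+r})_{0≤i,j≤m}. Then the binary form Cat_{m,m}(x,y:w) = det(x·A_{m,m;1} − y·A_{m,m;0}), which is homogeneous of degree m+1 in x and y, is apolar to w; that is, (w, Cat_{m,m}(x,y:w)·h) = 0 for every binary form h of degree m over k. -/

import Mathlib

open Finset

/-- The pairing between `w ∈ V_n` (encoded as a coefficient tuple) and a binary `n`-ic
form given as a polynomial in the variables `x = X 0`, `y = X 1`: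
`(w, v) = ∑ i, w i * (coefficient of x^(n-i) * y^i in v)`. -/
noncomputable def pairPoly {k : Type*} [CommRing k] (n : ℕ) (w : Fin (n + 1) → k)
    (v : MvPolynomial (Fin 2) k) : k :=
  ∑ i : Fin (n + 1), w i *
    MvPolynomial.coeff (Finsupp.single 0 (n - (i : ℕ)) + Finsupp.single 1 (i : ℕ)) v

/-- The catalecticant covariant `Cat_{m,m}(x,y:w) = det (x•A_{m,m;1} - y•A_{m,m;0})` of
`w ∈ V_{2m+1}`, regarded as a polynomial in the variables `x = X 0` and `y = X 1`. -/
noncomputable def catPoly {k : Type*} [CommRing k] (m : ℕ)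
    (w : Fin (2 * m + 1 + 1) → k) : MvPolynomial (Fin 2) k :=
  Matrix.det (Matrix.of fun i j : Fin (m + 1) =>
    MvPolynomial.X 0 * MvPolynomial.C (w ⟨(i : ℕ) + (j : ℕ) + 1, by omega⟩) -
    MvPolynomial.X 1 * MvPolynomial.C (w ⟨(i : ℕ) + (j : ℕ), by omega⟩))

namespace CatApolar

open MvPolynomial

variable {k : Type*} [Field k]

/-- `w` extended to all of `ℕ` by zero. -/
noncomputable def We (m : ℕ) (w : Fin (2 * m + 1 + 1) → k) (i : ℕ) : k :=
  if h : i < 2 * m + 1 + 1 then w ⟨i, h⟩ else 0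

/-- The constant Hankel `(m+1) × (m+2)` matrix. -/
noncomputable def Pk (m : ℕ) (w : Fin (2 * m + 1 + 1) → k) :
    Matrix (Fin (m + 1)) (Fin (m + 2)) k :=
  Matrix.of fun i s => We m w ((i : ℕ) + (s : ℕ))

/-- The signed maximal minors. -/
noncomputable def ee (m : ℕ) (w : Fin (2 * m + 1 + 1) → k) (s : Fin (m + 2)) : k :=
  (-1) ^ (s : ℕ) * ((Pk m w).submatrix id s.succAbove).det

/-- The big matrix with monomial top row and Hankel constant rows. -/
noncomputable def PP (m : ℕ) (w : Fin (2 * m + 1 + 1) → k) :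
    Matrix (Fin (m + 2)) (Fin (m + 2)) (MvPolynomial (Fin 2) k) :=
  Matrix.of (Fin.cons (fun s : Fin (m + 2) => X 0 ^ (m + 1 - (s : ℕ)) * X 1 ^ (s : ℕ))
    (fun i s => C (Pk m w i s)))

/-- The column-operation matrix. -/
noncomputable def TT (m : ℕ) : Matrix (Fin (m + 2)) (Fin (m + 2)) (MvPolynomial (Fin 2) k) :=
  Matrix.of fun s l =>
    (if (s : ℕ) = (l : ℕ) then (if (l : ℕ) = 0 then 1 else X 0) else 0) +
    (if (s : ℕ) + 1 = (l : ℕ) then -(X 1) else 0)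

lemma det_TT (m : ℕ) : (TT (k := k) m).det = X 0 ^ (m + 1) := by
  rw [Matrix.det_of_upperTriangular]
  · have hdiag : ∀ i : Fin (m + 2), TT (k := k) m i i =
        if (i : ℕ) = 0 then 1 else X 0 := by
      intro i
      simp [TT]
    rw [Finset.prod_congr rfl (fun i _ => hdiag i), Fin.prod_univ_succ]
    have h2 : ∀ i : Fin (m + 1),
        (if ((i.succ : Fin (m+2)) : ℕ) = 0 then (1 : MvPolynomial (Fin 2) k) else X 0) = X 0 := by
      intro i
      simp [Fin.val_succ]
    rw [Finset.prod_congr rfl (fun i _ => h2 i), Finset.prod_const, Finset.card_univ,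
      Fintype.card_fin]
    simp
  · intro i j hij
    simp only [Function.id_def] at hij
    have h1 : (i : ℕ) ≠ (j : ℕ) := by omega
    have h2 : (i : ℕ) + 1 ≠ (j : ℕ) := by omega
    simp [TT, h1, h2]

lemma mul_TT_zero (m : ℕ) (M : Matrix (Fin (m + 2)) (Fin (m + 2)) (MvPolynomial (Fin 2) k))
    (i : Fin (m + 2)) : (M * TT (k := k) m) i 0 = M i 0 := by
  rw [Matrix.mul_apply]
  rw [Finset.sum_eq_single (0 : Fin (m + 2))]
  · simp [TT]
  · intro b _ hb
    have h1 : (b : ℕ) ≠ 0 := fun h => hb (Fin.ext h)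
    simp [TT, h1]
  · simp

lemma mul_TT_succ (m : ℕ) (M : Matrix (Fin (m + 2)) (Fin (m + 2)) (MvPolynomial (Fin 2) k))
    (i : Fin (m + 2)) (l : Fin (m + 1)) :
    (M * TT (k := k) m) i l.succ = X 0 * M i l.succ - X 1 * M i l.castSucc := by
  rw [Matrix.mul_apply]
  simp only [TT, Matrix.of_apply, mul_add]
  rw [Finset.sum_add_distrib]
  have e1 : (∑ s : Fin (m+2), M i s * (if (s:ℕ) = (l.succ : ℕ) then
      (if (l.succ : ℕ) = 0 then 1 else X 0) else 0)) = X 0 * M i l.succ := by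
    rw [Finset.sum_eq_single l.succ]
    · simp [Fin.val_succ, mul_comm]
    · intro b _ hb
      have h1 : ¬ ((b : ℕ) = (l : ℕ) + 1) := fun h => hb (Fin.ext (by simp [Fin.val_succ, h]))
      simp [h1]
    · simp
  have e2 : (∑ s : Fin (m+2), M i s * (if (s:ℕ) + 1 = (l.succ : ℕ) then
      (-(X 1) : MvPolynomial (Fin 2) k) else 0)) = -(X 1 * M i l.castSucc) := by
    rw [Finset.sum_eq_single l.castSucc]
    · simp [Fin.val_succ, mul_comm]
    · intro b _ hb
      have h1 : ¬ ((b : ℕ) = (l : ℕ)) := fun h => hb (Fin.ext (by simp [h]))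
      simp [h1]
    · simp
  rw [e1, e2]
  ring

lemma catPoly_eq (m : ℕ) (w : Fin (2 * m + 1 + 1) → k) :
    catPoly m w = ∑ s : Fin (m + 2),
      C (ee m w s) * (X 0 ^ (m + 1 - (s : ℕ)) * X 1 ^ (s : ℕ)) := by
  have key : (PP m w * TT (k := k) m).det = X 0 ^ (m + 1) * catPoly m w := by
    rw [Matrix.det_succ_row_zero]
    rw [Finset.sum_eq_single (0 : Fin (m + 2))]
    · rw [mul_TT_zero]
      have h0 : PP m w 0 0 = X 0 ^ (m + 1) := by
        simp [PP, Fin.cons_zero]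
      rw [h0]
      have hsub : ((PP m w * TT (k := k) m).submatrix Fin.succ (Fin.succAbove 0)).det = catPoly m w := by
        rw [Fin.succAbove_zero]
        unfold catPoly
        congr 1
        ext i j
        rw [Matrix.submatrix_apply, mul_TT_succ]
        have hps : PP m w i.succ j.succ = C (We m w ((i : ℕ) + (j : ℕ) + 1)) := by
          have hnn : (i : ℕ) + ((j : ℕ) + 1) = (i : ℕ) + (j : ℕ) + 1 := by omega
          simp only [PP, Matrix.of_apply, Fin.cons_succ, Pk, Fin.val_succ, hnn]
        have hpc : PP m w i.succ j.castSucc = C (We m w ((i : ℕ) + (j : ℕ))) := by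
          simp only [PP, Matrix.of_apply, Fin.cons_succ, Pk, Fin.coe_castSucc]
        rw [hps, hpc]
        have hw1 : We m w ((i : ℕ) + (j : ℕ) + 1) = w ⟨(i : ℕ) + (j : ℕ) + 1, by omega⟩ := by
          rw [We, dif_pos (by omega)]
        have hw2 : We m w ((i : ℕ) + (j : ℕ)) = w ⟨(i : ℕ) + (j : ℕ), by omega⟩ := by
          rw [We, dif_pos (by omega)]
        rw [hw1, hw2]
        simp
      rw [hsub]
      simp
    · intro b _ hb
      obtain ⟨l, rfl⟩ : ∃ l : Fin (m + 1), b = l.succ := by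
        rcases Fin.eq_zero_or_eq_succ b with h | h
        · exact absurd h hb
        · exact h
      rw [mul_TT_succ]
      have h1 : PP m w 0 l.succ = X 0 ^ (m + 1 - ((l : ℕ) + 1)) * X 1 ^ ((l : ℕ) + 1) := by
        simp [PP, Fin.cons_zero, Fin.val_succ]
      have h2 : PP m w 0 l.castSucc = X 0 ^ (m + 1 - (l : ℕ)) * X 1 ^ (l : ℕ) := by
        simp [PP, Fin.cons_zero]
      rw [h1, h2]
      have hz : (X 0 * (X 0 ^ (m + 1 - ((l : ℕ) + 1)) * X 1 ^ ((l : ℕ) + 1)) -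
          X 1 * (X 0 ^ (m + 1 - (l : ℕ)) * X 1 ^ (l : ℕ)) : MvPolynomial (Fin 2) k) = 0 := by
        have hl : (l : ℕ) ≤ m := by omega
        have : m + 1 - (l : ℕ) = (m + 1 - ((l : ℕ) + 1)) + 1 := by omega
        rw [this, pow_succ, pow_succ]
        ring
      rw [hz]
      ring
    · simp
  have keyP : (PP m w).det = ∑ s : Fin (m + 2),
      C (ee m w s) * (X 0 ^ (m + 1 - (s : ℕ)) * X 1 ^ (s : ℕ)) := by
    rw [Matrix.det_succ_row_zero]
    apply Finset.sum_congr rfl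
    intro s _
    have h0 : PP m w 0 s = X 0 ^ (m + 1 - (s : ℕ)) * X 1 ^ (s : ℕ) := by
      simp [PP, Fin.cons_zero]
    have hsub : (PP m w).submatrix Fin.succ s.succAbove =
        (MvPolynomial.C (σ := Fin 2) (R := k)).mapMatrix ((Pk m w).submatrix id s.succAbove) := by
      ext i j
      simp [PP, Fin.cons_succ, RingHom.mapMatrix_apply]
    rw [h0, hsub, ← RingHom.map_det, ee]
    rw [map_mul, map_pow, map_neg, map_one]
    ring
  have hx : (X 0 : MvPolynomial (Fin 2) k) ^ (m + 1) ≠ 0 :=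
    pow_ne_zero _ (X_ne_zero 0)
  apply mul_left_cancel₀ hx
  rw [← key, Matrix.det_mul, det_TT, ← keyP]
  ring

lemma pairPoly_sum {n : ℕ} (w : Fin (n + 1) → k) {ι : Type*} (s : Finset ι)
    (f : ι → MvPolynomial (Fin 2) k) :
    pairPoly n w (∑ i ∈ s, f i) = ∑ i ∈ s, pairPoly n w (f i) := by
  simp only [pairPoly, MvPolynomial.coeff_sum, Finset.mul_sum]
  rw [Finset.sum_comm]

lemma pairPoly_C_mul {n : ℕ} (w : Fin (n + 1) → k) (c : k) (v : MvPolynomial (Fin 2) k) :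
    pairPoly n w (C c * v) = c * pairPoly n w v := by
  simp only [pairPoly, MvPolynomial.coeff_C_mul, Finset.mul_sum]
  apply Finset.sum_congr rfl
  intro i _
  ring

lemma single_le_single_iff (a b c d : ℕ) :
    (Finsupp.single (0 : Fin 2) a + Finsupp.single 1 b ≤
      Finsupp.single 0 c + Finsupp.single 1 d) ↔ a ≤ c ∧ b ≤ d := by
  rw [Finsupp.le_def]
  constructor
  · intro h
    have h0 := h 0
    have h1 := h 1
    simp [Finsupp.single_apply] at h0 h1
    exact ⟨h0, h1⟩
  · intro ⟨h0, h1⟩ x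
    fin_cases x <;> simp [Finsupp.single_apply, h0, h1]

lemma single_sub_single (a b c d : ℕ) :
    (Finsupp.single (0 : Fin 2) c + Finsupp.single 1 d) -
      (Finsupp.single 0 a + Finsupp.single 1 b) =
      Finsupp.single 0 (c - a) + Finsupp.single 1 (d - b) := by
  ext x
  fin_cases x <;> simp [Finsupp.tsub_apply, Finsupp.single_apply]

lemma pair_term (m : ℕ) (w : Fin (2 * m + 1 + 1) → k) (s : Fin (m + 2))
    (h : MvPolynomial (Fin 2) k) :
    pairPoly (2 * m + 1) w (X 0 ^ (m + 1 - (s : ℕ)) * X 1 ^ (s : ℕ) * h) =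
      ∑ j ∈ Finset.range (m + 1), We m w ((s : ℕ) + j) *
        MvPolynomial.coeff (Finsupp.single 0 (m - j) + Finsupp.single 1 j) h := by
  have hs : (s : ℕ) ≤ m + 1 := by omega
  rw [pairPoly]
  have hmon : (X 0 ^ (m + 1 - (s : ℕ)) * X 1 ^ (s : ℕ) : MvPolynomial (Fin 2) k) =
      MvPolynomial.monomial (Finsupp.single 0 (m + 1 - (s : ℕ)) + Finsupp.single 1 (s : ℕ)) 1 := by
    rw [X_pow_eq_monomial, X_pow_eq_monomial, monomial_mul, mul_one]
  rw [hmon]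
  set F : ℕ → k := fun i => if (s : ℕ) ≤ i ∧ i ≤ (s : ℕ) + m then
      We m w i * MvPolynomial.coeff
        (Finsupp.single 0 (2 * m + 1 - i - (m + 1 - (s : ℕ))) +
          Finsupp.single 1 (i - (s : ℕ))) h else 0 with hF
  have step : ∀ i : Fin (2 * m + 1 + 1), w i *
      MvPolynomial.coeff (Finsupp.single 0 (2 * m + 1 - (i : ℕ)) + Finsupp.single 1 (i : ℕ))
        ((MvPolynomial.monomial (Finsupp.single 0 (m + 1 - (s : ℕ)) +
          Finsupp.single 1 (s : ℕ)) 1) * h) = F (i : ℕ) := by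
    intro i
    have hi : (i : ℕ) ≤ 2 * m + 1 := by omega
    have hwi : w i = We m w (i : ℕ) := by
      rw [We, dif_pos i.isLt, Fin.eta]
    rw [MvPolynomial.coeff_monomial_mul']
    show _ = if (s : ℕ) ≤ (i : ℕ) ∧ (i : ℕ) ≤ (s : ℕ) + m then
        We m w (i : ℕ) * MvPolynomial.coeff
          (Finsupp.single 0 (2 * m + 1 - (i : ℕ) - (m + 1 - (s : ℕ))) +
            Finsupp.single 1 ((i : ℕ) - (s : ℕ))) h else 0
    by_cases hc : (s : ℕ) ≤ (i : ℕ) ∧ (i : ℕ) ≤ (s : ℕ) + m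
    · rw [if_pos ((single_le_single_iff _ _ _ _).mpr ⟨by omega, by omega⟩),
        single_sub_single, one_mul, if_pos hc, hwi]
    · have hnc : ¬ (Finsupp.single (0 : Fin 2) (m + 1 - (s : ℕ)) + Finsupp.single 1 (s : ℕ) ≤
          Finsupp.single 0 (2 * m + 1 - (i : ℕ)) + Finsupp.single 1 (i : ℕ)) := by
        rw [single_le_single_iff]
        omega
      rw [if_neg hnc, if_neg hc, mul_zero]
  rw [Finset.sum_congr rfl (fun i _ => step i)]
  rw [Fin.sum_univ_eq_sum_range F]
  simp only [hF]
  rw [← Finset.sum_filter]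
  have hfil : (Finset.range (2 * m + 1 + 1)).filter
      (fun i => (s : ℕ) ≤ i ∧ i ≤ (s : ℕ) + m) = Finset.Ico (s : ℕ) ((s : ℕ) + m + 1) := by
    ext i
    simp only [Finset.mem_filter, Finset.mem_range, Finset.mem_Ico]
    omega
  rw [hfil, Finset.sum_Ico_eq_sum_range]
  have hlen : (s : ℕ) + m + 1 - (s : ℕ) = m + 1 := by omega
  rw [hlen]
  apply Finset.sum_congr rfl
  intro j hj
  rw [Finset.mem_range] at hj
  have e1 : 2 * m + 1 - ((s : ℕ) + j) - (m + 1 - (s : ℕ)) = m - j := by omega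
  have e2 : (s : ℕ) + j - (s : ℕ) = j := by omega
  rw [e1, e2]

lemma sum_ee_We (m : ℕ) (w : Fin (2 * m + 1 + 1) → k) (j : ℕ) (hj : j < m + 1) :
    ∑ s : Fin (m + 2), ee m w s * We m w ((s : ℕ) + j) = 0 := by
  set jf : Fin (m + 1) := ⟨j, hj⟩
  set R : Matrix (Fin (m + 2)) (Fin (m + 2)) k :=
    Matrix.of (Fin.cons (fun s : Fin (m + 2) => We m w (j + (s : ℕ))) (Pk m w)) with hR
  have hdet : R.det = 0 := by
    apply Matrix.det_zero_of_row_eq (i := 0) (j := jf.succ) (Fin.succ_ne_zero jf).symm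
    funext t
    simp only [hR, Matrix.of_apply, Fin.cons_zero, Fin.cons_succ, Pk]
    rfl
  have hexp : R.det = ∑ s : Fin (m + 2), ee m w s * We m w ((s : ℕ) + j) := by
    rw [Matrix.det_succ_row_zero]
    apply Finset.sum_congr rfl
    intro s _
    have h0 : R 0 s = We m w (j + (s : ℕ)) := by simp [hR, Fin.cons_zero]; rfl
    have hsub : R.submatrix Fin.succ s.succAbove = (Pk m w).submatrix id s.succAbove := by
      ext i t
      simp [hR, Fin.cons_succ]
      rfl
    rw [h0, hsub, ee]
    rw [Nat.add_comm j (s : ℕ)]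
    ring
  rw [← hexp, hdet]

end CatApolar

/-- For `w ∈ V_{2m+1}`, the catalecticant covariant `Cat_{m,m}(x,y:w)`, which is a binary
form homogeneous of degree `m+1`, is apolar to `w`: `(w, Cat_{m,m}(x,y:w)·h) = 0` for
every binary form `h` of degree `m`. -/
theorem stmt1 {k : Type*} [Field k] (m : ℕ) (hm : 1 ≤ m)
    (w : Fin (2 * m + 1 + 1) → k) :
    (catPoly m w).IsHomogeneous (m + 1) ∧
    ∀ h : MvPolynomial (Fin 2) k, h.IsHomogeneous m →
      pairPoly (2 * m + 1) w (catPoly m w * h) = 0 := by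
  constructor
  · rw [CatApolar.catPoly_eq]
    apply MvPolynomial.IsHomogeneous.sum
    intro s _
    have h1 : (MvPolynomial.C (CatApolar.ee m w s) *
        (MvPolynomial.X 0 ^ (m + 1 - (s : ℕ)) * MvPolynomial.X 1 ^ (s : ℕ)) :
        MvPolynomial (Fin 2) k).IsHomogeneous (0 + ((m + 1 - (s : ℕ)) + (s : ℕ))) :=
      (MvPolynomial.isHomogeneous_C _ _).mul
        ((MvPolynomial.isHomogeneous_X_pow _ _).mul (MvPolynomial.isHomogeneous_X_pow _ _))
    have he : 0 + ((m + 1 - (s : ℕ)) + (s : ℕ)) = m + 1 := by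
      have : (s : ℕ) ≤ m + 1 := by omega
      omega
    rwa [he] at h1
  · intro h _
    rw [CatApolar.catPoly_eq, Finset.sum_mul]
    have step : ∀ s : Fin (m + 2),
        (MvPolynomial.C (CatApolar.ee m w s) * (MvPolynomial.X 0 ^ (m + 1 - (s : ℕ)) * MvPolynomial.X 1 ^ (s : ℕ))) * h =
        MvPolynomial.C (CatApolar.ee m w s) * ((MvPolynomial.X 0 ^ (m + 1 - (s : ℕ)) * MvPolynomial.X 1 ^ (s : ℕ)) * h) := by
      intro s; ring
    rw [Finset.sum_congr rfl (fun s _ => step s), CatApolar.pairPoly_sum]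
    have step2 : ∀ s : Fin (m + 2),
        pairPoly (2 * m + 1) w
          (MvPolynomial.C (CatApolar.ee m w s) * ((MvPolynomial.X 0 ^ (m + 1 - (s : ℕ)) * MvPolynomial.X 1 ^ (s : ℕ)) * h)) =
        ∑ j ∈ Finset.range (m + 1), CatApolar.ee m w s * (CatApolar.We m w ((s : ℕ) + j) *
          MvPolynomial.coeff (Finsupp.single 0 (m - j) + Finsupp.single 1 j) h) := by
      intro s
      rw [CatApolar.pairPoly_C_mul, CatApolar.pair_term, Finset.mul_sum]
    rw [Finset.sum_congr rfl (fun s _ => step2 s), Finset.sum_comm]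
    apply Finset.sum_eq_zero
    intro j hj
    rw [Finset.mem_range] at hj
    have : ∑ s : Fin (m + 2), CatApolar.ee m w s * (CatApolar.We m w ((s : ℕ) + j) *
        MvPolynomial.coeff (Finsupp.single 0 (m - j) + Finsupp.single 1 j) h) =
        (∑ s : Fin (m + 2), CatApolar.ee m w s * CatApolar.We m w ((s : ℕ) + j)) *
        MvPolynomial.coeff (Finsupp.single 0 (m - j) + Finsupp.single 1 j) h := by
      rw [Finset.sum_mul]
      apply Finset.sum_congr rfl
      intro s _
      ring
    rw [this, CatApolar.sum_ee_We m w j hj, zero_mul]
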